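/- Let F ∈ ℂ[x_1,…,x_n] be homogeneous of degree d, let α = a_1α_1 + ⋯ + a_nα_n ∈ T_1 be a nonzero linear form, and let a = (a_1,…,a_n) ∈ ℂ^n. Then for 0 ≤ k ≤ d, the power α^k lies in F^⊥ if and only if F vanishes to order at least d − k + 1 at the point a, i.e. every partial derivative of F of order at most d − k vanishes at a. -/

import Mathlib

/-!
Apolarity setup.  `S = ℂ[x_1,…,x_n]` and its dual ring `T = ℂ[α_1,…,α_n]` are both
realized as `MvPolynomial (Fin n) ℂ`; the apolarity action `Θ ⌟ F` (`contract Θ F`)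
lets `α_i` act as the partial differentiation operator `∂/∂x_i`.
-/

open MvPolynomial

noncomputable section Apolarity

/-- Partial derivatives on `ℂ[x_1,…,x_n]` commute. -/
lemma pderiv_pderiv_comm (n : ℕ) (i j : Fin n) (f : MvPolynomial (Fin n) ℂ) :
    pderiv i (pderiv j f) = pderiv j (pderiv i f) := by
  induction f using MvPolynomial.induction_on with
  | C a => simp
  | add p q hp hq => simp [hp, hq]
  | mul_X p k hp =>
    rcases eq_or_ne i k with rfl | hik
    · rcases eq_or_ne j i with rfl | hjk
      · rfl
      · simp only [pderiv_mul, pderiv_X_self, pderiv_X_of_ne hjk, pderiv_X_of_ne hjk.symm,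
          map_add, map_zero, map_one, Derivation.map_one_eq_zero, mul_one, mul_zero,
          add_zero, zero_add, hp]
    · rcases eq_or_ne j k with rfl | hjk
      · simp only [pderiv_mul, pderiv_X_self, pderiv_X_of_ne hik, pderiv_X_of_ne hik.symm,
          map_add, map_zero, map_one, Derivation.map_one_eq_zero, mul_one, mul_zero,
          add_zero, zero_add, hp]
      · simp only [pderiv_mul, pderiv_X_of_ne hik.symm, pderiv_X_of_ne hjk.symm, map_add,
          map_zero, mul_zero, add_zero, zero_add, hp]

variable (n : ℕ)

/-- The endomorphism `∂/∂x_i` of `S = ℂ[x_1,…,x_n]`. -/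
def derOp (i : Fin n) : Module.End ℂ (MvPolynomial (Fin n) ℂ) :=
  (pderiv i).toLinearMap

lemma derOp_commute (i j : Fin n) : Commute (derOp n i) (derOp n j) :=
  LinearMap.ext fun f => pderiv_pderiv_comm n i j f

/-- The commuting product of the operators `(∂/∂x_i)^(m i)`. -/
def piDiffHom : (Fin n → Multiplicative ℕ) →* Module.End ℂ (MvPolynomial (Fin n) ℂ) :=
  MonoidHom.noncommPiCoprod (fun i : Fin n => powersHom _ (derOp n i))
    (fun i j _ x y => ((derOp_commute n i j).pow_pow x y))

/-- The differential operator `∏ i, (∂/∂x_i)^(m i)` attached to an exponent vector `m`. -/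
def diffMonoidHom : Multiplicative (Fin n →₀ ℕ) →* Module.End ℂ (MvPolynomial (Fin n) ℂ) :=
  (piDiffHom n).comp
    (AddMonoidHom.toMultiplicative
      (Finsupp.coeFnAddHom : (Fin n →₀ ℕ) →+ (Fin n → ℕ)))

/-- The apolarity action of the dual ring `T = ℂ[α_1,…,α_n]` on `S = ℂ[x_1,…,x_n]`, as an
algebra homomorphism to differential operators: `α_i` acts as `∂/∂x_i`. -/
def apolarAlgHom :
    MvPolynomial (Fin n) ℂ →ₐ[ℂ] Module.End ℂ (MvPolynomial (Fin n) ℂ) :=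
  AddMonoidAlgebra.lift ℂ _ (Fin n →₀ ℕ) (diffMonoidHom n)

variable {n}

/-- The apolarity action `Θ ⌟ F`: apply to `F` the differential operator obtained from `Θ`
by substituting `∂/∂x_i` for the `i`-th (dual) variable. -/
def contract (Θ F : MvPolynomial (Fin n) ℂ) : MvPolynomial (Fin n) ℂ :=
  apolarAlgHom n Θ F

lemma apolarAlgHom_X (i : Fin n) : apolarAlgHom n (X i) = derOp n i := by
  classical
  have hX : (X i : MvPolynomial (Fin n) ℂ)
      = AddMonoidAlgebra.single (Finsupp.single i 1) (1 : ℂ) := rfl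
  rw [hX]
  rw [show apolarAlgHom n (AddMonoidAlgebra.single (Finsupp.single i 1) (1:ℂ))
      = (1:ℂ) • diffMonoidHom n (Multiplicative.ofAdd (Finsupp.single i 1)) from
    AddMonoidAlgebra.lift_single _ _ _]
  rw [one_smul]
  rw [diffMonoidHom]
  have harg : (AddMonoidHom.toMultiplicative
        (Finsupp.coeFnAddHom : (Fin n →₀ ℕ) →+ (Fin n → ℕ)))
        (Multiplicative.ofAdd (Finsupp.single i 1))
      = Pi.mulSingle (M := fun _ : Fin n => Multiplicative ℕ) i (Multiplicative.ofAdd 1) := by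
    funext j
    rcases eq_or_ne j i with rfl | hj
    · show Multiplicative.ofAdd ((Finsupp.single j 1 : Fin n →₀ ℕ) j)
        = Pi.mulSingle (M := fun _ : Fin n => Multiplicative ℕ) j (Multiplicative.ofAdd 1) j
      rw [Finsupp.single_eq_same, Pi.mulSingle_eq_same]
    · show Multiplicative.ofAdd ((Finsupp.single i 1 : Fin n →₀ ℕ) j)
        = Pi.mulSingle (M := fun _ : Fin n => Multiplicative ℕ) i (Multiplicative.ofAdd 1) j
      rw [Finsupp.single_eq_of_ne hj, Pi.mulSingle_eq_of_ne hj]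
      exact ofAdd_zero
  refine (congrArg (piDiffHom n) harg).trans ?_
  rw [piDiffHom]
  exact (MonoidHom.noncommPiCoprod_mulSingle _ i _).trans rfl

/-- Sanity check: the dual variable `α_i` acts on `F` as `∂F/∂x_i`. -/
@[simp] lemma contract_X (i : Fin n) (F : MvPolynomial (Fin n) ℂ) :
    contract (X i) F = pderiv i F := by
  rw [contract, apolarAlgHom_X]; rfl

/-- The apolar (annihilator) ideal `F^⊥ = {Θ ∈ T : Θ ⌟ F = 0}` of a polynomial `F`. -/
def apolarIdeal (F : MvPolynomial (Fin n) ℂ) : Ideal (MvPolynomial (Fin n) ℂ) where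
  carrier := {Θ | contract Θ F = 0}
  zero_mem' := by simp [contract]
  add_mem' := by
    intro a b ha hb
    simp only [Set.mem_setOf_eq, contract, map_add, LinearMap.add_apply] at *
    rw [ha, hb, add_zero]
  smul_mem' := by
    intro c x hx
    simp only [Set.mem_setOf_eq, smul_eq_mul, contract, map_mul, Module.End.mul_apply] at *
    rw [hx, map_zero]

@[simp] lemma mem_apolarIdeal {Θ F : MvPolynomial (Fin n) ℂ} :
    Θ ∈ apolarIdeal F ↔ contract Θ F = 0 := Iff.rfl

variable (n)

/-- The irrelevant maximal ideal `m = ⟨α_1,…,α_n⟩` of `T`. -/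
def irrIdeal : Ideal (MvPolynomial (Fin n) ℂ) :=
  Ideal.span (Set.range X)

variable {n}

/-- The homogeneous ideal `I` has a minimal generator of degree `k`, i.e. `(I/mI)_k ≠ 0`:
there is a homogeneous element of `I` of degree `k` not belonging to `m * I`. -/
def HasMinGenOfDegree (I : Ideal (MvPolynomial (Fin n) ℂ)) (k : ℕ) : Prop :=
  ∃ Θ, Θ ∈ I ∧ Θ.IsHomogeneous k ∧ Θ ∉ irrIdeal n * I

/-- The homogeneous ideal `I` has at least `r` minimal generators of degree `k`, i.e.
`dim_ℂ (I/mI)_k ≥ r`: there are `r` homogeneous degree-`k` elements of `I` that are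
linearly independent modulo `m * I`. -/
def MinGensAtLeast (I : Ideal (MvPolynomial (Fin n) ℂ)) (k r : ℕ) : Prop :=
  ∃ Θ : Fin r → MvPolynomial (Fin n) ℂ,
    (∀ i, Θ i ∈ I ∧ (Θ i).IsHomogeneous k) ∧
    ∀ c : Fin r → ℂ, (∑ i, c i • Θ i) ∈ irrIdeal n * I → ∀ i, c i = 0

/-- `F` is an `s`-fold direct sum of degree `d`: `F = F_1 + ⋯ + F_s` where the `F_i` are
nonzero degree-`d` forms in independent subspaces `V_i` of the space of linear forms with
`V = V_1 ⊕ ⋯ ⊕ V_s` (i.e. in disjoint sets of variables, up to linear change of variables;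
`F_i ∈ S^d V_i` is expressed as membership in the subalgebra generated by `V_i`). -/
def IsSFoldDirectSum (F : MvPolynomial (Fin n) ℂ) (d s : ℕ) : Prop :=
  ∃ (V : Fin s → Submodule ℂ (MvPolynomial (Fin n) ℂ))
    (G : Fin s → MvPolynomial (Fin n) ℂ),
    (∀ i, V i ≤ homogeneousSubmodule (Fin n) ℂ 1) ∧
    iSupIndep V ∧
    (⨆ i, V i) = homogeneousSubmodule (Fin n) ℂ 1 ∧
    (∀ i, G i ≠ 0 ∧ (G i).IsHomogeneous d ∧ G i ∈ Algebra.adjoin ℂ (V i : Set _)) ∧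
    F = ∑ i, G i

/-- `F` is a direct sum: `F = F₁ + F₂` with `F₁ ∈ S^d V₁`, `F₂ ∈ S^d V₂` nonzero and
`V = V₁ ⊕ V₂`. -/
def IsDirectSum (F : MvPolynomial (Fin n) ℂ) (d : ℕ) : Prop :=
  IsSFoldDirectSum F d 2

/-- `F` is a limit (as `t → 0`) of `s`-fold direct sums of degree `d`. -/
def IsLimitOfSFoldDirectSums (F : MvPolynomial (Fin n) ℂ) (d s : ℕ) : Prop :=
  ∃ G : ℂ → MvPolynomial (Fin n) ℂ,
    (∀ t : ℂ, t ≠ 0 → IsSFoldDirectSum (G t) d s) ∧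
    ∀ m : Fin n →₀ ℕ,
      Filter.Tendsto (fun t => MvPolynomial.coeff m (G t))
        (nhdsWithin (0 : ℂ) {(0 : ℂ)}ᶜ) (nhds (MvPolynomial.coeff m F))

/-- `F` is a limit of direct sums. -/
def IsLimitOfDirectSums (F : MvPolynomial (Fin n) ℂ) (d : ℕ) : Prop :=
  IsLimitOfSFoldDirectSums F d 2

/-- `F` is concise: `(F^⊥)_1 = 0`, i.e. `F` cannot be written using fewer variables. -/
def Concise (F : MvPolynomial (Fin n) ℂ) : Prop :=
  ∀ Θ : MvPolynomial (Fin n) ℂ, Θ.IsHomogeneous 1 → contract Θ F = 0 → Θ = 0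

end Apolarity

section Aux

variable {n : ℕ}

lemma aux_degree_eq_sum (m : Fin n →₀ ℕ) : m.degree = ∑ i, m i :=
  Finset.sum_subset (Finset.subset_univ _) fun _ _ hi => Finsupp.notMem_support_iff.mp hi

lemma aux_contract_mul (Θ Ψ F : MvPolynomial (Fin n) ℂ) :
    contract (Θ * Ψ) F = contract Θ (contract Ψ F) := by
  simp only [contract, map_mul, Module.End.mul_apply]

lemma aux_contract_one (F : MvPolynomial (Fin n) ℂ) : contract 1 F = F := by
  simp only [contract, map_one, Module.End.one_apply]

lemma aux_contract_zero (Θ : MvPolynomial (Fin n) ℂ) : contract Θ 0 = 0 :=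
  map_zero (apolarAlgHom n Θ)

lemma aux_contract_sum {ι : Type*} (s : Finset ι) (f : ι → MvPolynomial (Fin n) ℂ)
    (F : MvPolynomial (Fin n) ℂ) :
    contract (∑ i ∈ s, f i) F = ∑ i ∈ s, contract (f i) F := by
  simp only [contract, map_sum, LinearMap.coe_sum, Finset.sum_apply]

lemma aux_contract_smul (c : ℂ) (Θ F : MvPolynomial (Fin n) ℂ) :
    contract (c • Θ) F = c • contract Θ F := by
  simp only [contract, map_smul, LinearMap.smul_apply]

lemma aux_contract_eq_sum (Θ F : MvPolynomial (Fin n) ℂ) :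
    contract Θ F = ∑ m ∈ Θ.support, MvPolynomial.coeff m Θ • contract (monomial m 1) F := by
  conv_lhs => rw [Θ.as_sum]
  rw [aux_contract_sum]
  refine Finset.sum_congr rfl fun m _ => ?_
  rw [show monomial m (MvPolynomial.coeff m Θ) = MvPolynomial.coeff m Θ • monomial m 1 by
    rw [smul_monomial, smul_eq_mul, mul_one], aux_contract_smul]

lemma aux_contract_linform (b : Fin n → ℂ) (F : MvPolynomial (Fin n) ℂ) :
    contract (∑ i, b i • X i) F = ∑ i, b i • pderiv i F := by
  rw [aux_contract_sum]
  exact Finset.sum_congr rfl fun i _ => by rw [aux_contract_smul, contract_X]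

/-- Euler's identity for homogeneous polynomials. -/
lemma aux_euler {e : ℕ} {H : MvPolynomial (Fin n) ℂ} (hH : H.IsHomogeneous e) :
    ∑ i, (X i : MvPolynomial (Fin n) ℂ) * pderiv i H = (e : ℂ) • H := by
  have hmono : ∀ (s : Fin n →₀ ℕ) (c : ℂ), s.degree = e →
      ∑ i, (X i : MvPolynomial (Fin n) ℂ) * pderiv i (monomial s c)
        = (e : ℂ) • monomial s c := by
    intro s c hs
    have hterm : ∀ i : Fin n, (X i : MvPolynomial (Fin n) ℂ) * pderiv i (monomial s c)
        = (s i : ℂ) • monomial s c := by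
      intro i
      rw [pderiv_monomial]
      rcases Nat.eq_zero_or_pos (s i) with h0 | hpos
      · simp [h0]
      · have hle : Finsupp.single i 1 ≤ s := by
          rw [Finsupp.single_le_iff]; omega
        rw [show (X i : MvPolynomial (Fin n) ℂ) = monomial (Finsupp.single i 1) 1 from rfl,
          monomial_mul, one_mul, add_tsub_cancel_of_le hle, smul_monomial, smul_eq_mul,
          mul_comm]
    rw [Finset.sum_congr rfl fun i _ => hterm i, ← Finset.sum_smul]
    congr 1
    rw [← Nat.cast_sum, ← aux_degree_eq_sum, hs]
  conv_lhs => rw [H.as_sum]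
  simp only [map_sum, Finset.mul_sum, Finset.smul_sum]
  rw [Finset.sum_comm]
  conv_rhs => rw [H.as_sum, Finset.smul_sum]
  refine Finset.sum_congr rfl fun v hv => ?_
  refine hmono v _ ?_
  have hc := MvPolynomial.mem_support_iff.mp hv
  have := hH hc
  rwa [Finsupp.degree_eq_weight_one]

lemma aux_pderiv_isHomogeneous {e : ℕ} {H : MvPolynomial (Fin n) ℂ}
    (hH : H.IsHomogeneous e) (i : Fin n) : (pderiv i H).IsHomogeneous (e - 1) := by
  have hrw : pderiv i H = ∑ v ∈ H.support, pderiv i (monomial v (MvPolynomial.coeff v H)) := by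
    conv_lhs => rw [H.as_sum]
    rw [map_sum]
  rw [← mem_homogeneousSubmodule, hrw]
  refine Submodule.sum_mem _ fun v hv => ?_
  rw [pderiv_monomial, mem_homogeneousSubmodule]
  rcases Nat.eq_zero_or_pos (v i) with h0 | hpos
  · simp only [h0, Nat.cast_zero, mul_zero, monomial_zero]
    exact isHomogeneous_zero _ _ _
  · apply isHomogeneous_monomial
    have hle : Finsupp.single i 1 ≤ v := by rw [Finsupp.single_le_iff]; omega
    have hd : v.degree = e := by
      have hc := MvPolynomial.mem_support_iff.mp hv
      have := hH hc
      rwa [Finsupp.degree_eq_weight_one]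
    have h1 : (Finsupp.single i 1 : Fin n →₀ ℕ) i = 1 := Finsupp.single_eq_same
    have h2 : ∑ j, ((v - Finsupp.single i 1 : Fin n →₀ ℕ)) j + ∑ j, (Finsupp.single i 1 : Fin n →₀ ℕ) j
        = ∑ j, v j := by
      rw [← Finset.sum_add_distrib]
      refine Finset.sum_congr rfl fun j _ => ?_
      have : ((v - Finsupp.single i 1 : Fin n →₀ ℕ)) j = v j - (Finsupp.single i 1 : Fin n →₀ ℕ) j :=
        Finsupp.tsub_apply _ _ _
      have hle' : (Finsupp.single i 1 : Fin n →₀ ℕ) j ≤ v j := hle j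
      omega
    have h3 : ∑ j, (Finsupp.single i 1 : Fin n →₀ ℕ) j = 1 := by
      rw [Finset.sum_eq_single i (fun j _ hj => Finsupp.single_eq_of_ne hj)
        (fun h => absurd (Finset.mem_univ i) h), h1]
    rw [aux_degree_eq_sum] at hd ⊢
    omega

/-- Key lemma: a `e`-fold directional derivative of a homogeneous degree-`e` polynomial
is the constant `e! * H(b)`. -/
lemma aux_contract_pow_linform (b : Fin n → ℂ) :
    ∀ (e : ℕ) (H : MvPolynomial (Fin n) ℂ), H.IsHomogeneous e →
      contract ((∑ i, b i • X i) ^ e) H = C ((e.factorial : ℂ) * MvPolynomial.eval b H) := by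
  intro e
  induction e with
  | zero =>
    intro H hH
    have hC : H = C (MvPolynomial.coeff 0 H) := by
      ext d
      rcases eq_or_ne d 0 with rfl | hd
      · simp
      · rw [coeff_C, if_neg (fun h => hd h.symm)]
        exact hH.coeff_eq_zero (by simpa [Finsupp.degree_eq_zero_iff] using hd)
      
    rw [pow_zero, aux_contract_one]
    conv_lhs => rw [hC]
    rw [hC]
    simp
  | succ e ih =>
    intro H hH
    rw [pow_succ, aux_contract_mul, aux_contract_linform]
    have h1 : (∑ i, b i • pderiv i H).IsHomogeneous e := by
      rw [← mem_homogeneousSubmodule]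
      refine Submodule.sum_mem _ fun i _ => Submodule.smul_mem _ _ ?_
      rw [mem_homogeneousSubmodule]
      simpa using aux_pderiv_isHomogeneous hH i
    rw [ih _ h1]
    have heval : MvPolynomial.eval b (∑ i, b i • pderiv i H)
        = ((e + 1 : ℕ) : ℂ) * MvPolynomial.eval b H := by
      have h2 := congrArg (MvPolynomial.eval b) (aux_euler hH)
      simp only [map_sum, eval_mul, eval_X, smul_eq_C_mul, eval_C, Finset.smul_sum] at h2 ⊢
      simpa using h2
    rw [heval, Nat.factorial_succ]
    congr 1
    push_cast
    ring

lemma aux_pdm_isHomogeneous {d : ℕ} {F : MvPolynomial (Fin n) ℂ} (hF : F.IsHomogeneous d) :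
    ∀ m : Fin n →₀ ℕ, (contract (monomial m 1) F).IsHomogeneous (d - m.degree) := by
  suffices h : ∀ (j : ℕ) (m : Fin n →₀ ℕ), m.degree ≤ j →
      (contract (monomial m 1) F).IsHomogeneous (d - m.degree) from
    fun m => h m.degree m le_rfl
  intro j
  induction j with
  | zero =>
    intro m hm
    have : m = 0 := by rwa [Nat.le_zero, Finsupp.degree_eq_zero_iff] at hm
    subst this
    rw [show (monomial (0 : Fin n →₀ ℕ) (1 : ℂ)) = 1 from rfl, aux_contract_one]
    simpa using hF
  | succ j ih =>
    intro m hm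
    rcases eq_or_ne m 0 with rfl | hm0
    · rw [show (monomial (0 : Fin n →₀ ℕ) (1 : ℂ)) = 1 from rfl, aux_contract_one]
      simpa using hF
    · obtain ⟨i, hi⟩ : ∃ i, m i ≠ 0 := by
        by_contra h
        push_neg at h
        exact hm0 (Finsupp.ext fun i => h i)
      have hle : Finsupp.single i 1 ≤ m := by rw [Finsupp.single_le_iff]; omega
      set m' := m - Finsupp.single i 1 with hm'
      have hmm : Finsupp.single i 1 + m' = m := add_tsub_cancel_of_le hle
      have hdeg : m'.degree + 1 = m.degree := by
        have h3 : ∑ j, (Finsupp.single i 1 : Fin n →₀ ℕ) j = 1 := by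
          rw [Finset.sum_eq_single i (fun j _ hj => Finsupp.single_eq_of_ne hj)
            (fun h => absurd (Finset.mem_univ i) h), Finsupp.single_eq_same]
        have h4 : ∑ j, (Finsupp.single i 1 : Fin n →₀ ℕ) j + ∑ j, m' j = ∑ j, m j := by
          rw [← Finset.sum_add_distrib]
          exact Finset.sum_congr rfl fun j _ => by
            rw [← Finsupp.add_apply, hmm]
        rw [aux_degree_eq_sum, aux_degree_eq_sum]
        omega
      have hsplit : contract (monomial m 1) F
          = pderiv i (contract (monomial m' 1) F) := by
        rw [← hmm, ← contract_X, ← aux_contract_mul,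
          show (X i : MvPolynomial (Fin n) ℂ) * monomial m' 1
            = monomial (Finsupp.single i 1 + m') 1 by
            rw [show (X i : MvPolynomial (Fin n) ℂ) = monomial (Finsupp.single i 1) 1 from rfl,
              monomial_mul, one_mul]]
      have hm'j : m'.degree ≤ j := by omega
      have := aux_pderiv_isHomogeneous (ih m' hm'j) i
      rw [hsplit]
      convert this using 1
      omega

lemma aux_contract_isHomogeneous {j d : ℕ} {Θ F : MvPolynomial (Fin n) ℂ}
    (hΘ : Θ.IsHomogeneous j) (hF : F.IsHomogeneous d) :
    (contract Θ F).IsHomogeneous (d - j) := by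
  rw [aux_contract_eq_sum, ← mem_homogeneousSubmodule]
  refine Submodule.sum_mem _ fun m hm => Submodule.smul_mem _ _ ?_
  rw [mem_homogeneousSubmodule]
  have hdm : m.degree = j := by
    have := hΘ (MvPolynomial.mem_support_iff.mp hm)
    rwa [Finsupp.degree_eq_weight_one]
  rw [← hdm]
  exact aux_pdm_isHomogeneous hF m

end Aux

/-- For a homogeneous `F` of degree `d`, a nonzero linear form
`α = a₁α₁ + ⋯ + aₙαₙ` and `0 ≤ k ≤ d`:  `α^k ∈ F^⊥` iff `F` vanishes to order at least
`d - k + 1` at `a`, i.e. every partial derivative of `F` of order at most `d - k`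
vanishes at `a`. -/
theorem power_in_apolar_iff_vanishing_order
    (n d k : ℕ) (hk : k ≤ d) (F : MvPolynomial (Fin n) ℂ) (hF : F.IsHomogeneous d)
    (a : Fin n → ℂ) (ha : a ≠ 0) :
    ((∑ i, a i • X i : MvPolynomial (Fin n) ℂ) ^ k ∈ apolarIdeal F) ↔
    (∀ m : Fin n →₀ ℕ, (∑ i, m i) ≤ d - k →
      MvPolynomial.eval a (contract (monomial m 1) F) = 0) := by
  have hα : (∑ i, a i • X i : MvPolynomial (Fin n) ℂ).IsHomogeneous 1 := by
    rw [← mem_homogeneousSubmodule]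
    refine Submodule.sum_mem _ fun i _ => Submodule.smul_mem _ _ ?_
    rw [mem_homogeneousSubmodule]
    exact isHomogeneous_X ℂ i
  have hαk : ((∑ i, a i • X i : MvPolynomial (Fin n) ℂ) ^ k).IsHomogeneous k := by
    simpa using hα.pow k
  have hfac : ∀ j : ℕ, ((j.factorial : ℂ)) ≠ 0 := fun j =>
    Nat.cast_ne_zero.mpr j.factorial_ne_zero
  constructor
  · intro hmem m hm
    rw [mem_apolarIdeal] at hmem
    have key : ∀ (t : ℕ) (m : Fin n →₀ ℕ), m.degree + t = d - k →
        MvPolynomial.eval a (contract (monomial m 1) F) = 0 := by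
      intro t
      induction t with
      | zero =>
        intro m hm0
        have hdeg : (contract (monomial m 1) F).IsHomogeneous k := by
          have h1 := aux_pdm_isHomogeneous hF m
          convert h1 using 1
          omega
        have h1 := aux_contract_pow_linform a k _ hdeg
        have h2 : contract ((∑ i, a i • X i) ^ k) (contract (monomial m 1) F) = 0 := by
          rw [← aux_contract_mul, mul_comm, aux_contract_mul, hmem, aux_contract_zero]
        rw [h2] at h1
        have h3 := (C_eq_zero.mp h1.symm)
        rcases mul_eq_zero.mp h3 with h | h
        · exact absurd h (hfac k)
        · exact h
      | succ t ih =>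
        intro m hm0
        set H := contract (monomial m 1) F with hH
        have hHhom : H.IsHomogeneous (k + t + 1) := by
          have h1 := aux_pdm_isHomogeneous hF m
          convert h1 using 1
          omega
        have heuler := congrArg (MvPolynomial.eval a) (aux_euler hHhom)
        simp only [map_sum, eval_mul, eval_X, smul_eq_C_mul, eval_C] at heuler
        have hterm : ∀ i : Fin n, MvPolynomial.eval a (pderiv i H) = 0 := by
          intro i
          have hsplit : pderiv i H = contract (monomial (Finsupp.single i 1 + m) 1) F := by
            rw [hH, ← contract_X, ← aux_contract_mul,
              show (X i : MvPolynomial (Fin n) ℂ) * monomial m 1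
                = monomial (Finsupp.single i 1 + m) 1 by
                rw [show (X i : MvPolynomial (Fin n) ℂ)
                    = monomial (Finsupp.single i 1) 1 from rfl, monomial_mul, one_mul]]
          have hdeg1 : (Finsupp.single i 1 + m).degree + t = d - k := by
            have h3 : ∑ j, (Finsupp.single i 1 : Fin n →₀ ℕ) j = 1 := by
              rw [Finset.sum_eq_single i (fun j _ hj => Finsupp.single_eq_of_ne hj)
                (fun h => absurd (Finset.mem_univ i) h), Finsupp.single_eq_same]
            have h4 : (Finsupp.single i 1 + m).degree
                = ∑ j, (Finsupp.single i 1 : Fin n →₀ ℕ) j + ∑ j, m j := by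
              rw [aux_degree_eq_sum, ← Finset.sum_add_distrib]
              exact Finset.sum_congr rfl fun j _ => Finsupp.add_apply _ _ _
            rw [h4, h3]
            rw [aux_degree_eq_sum] at hm0
            omega
          rw [hsplit]
          exact ih _ hdeg1
        rw [Finset.sum_congr rfl (fun i _ => by rw [hterm i, mul_zero])] at heuler
        rw [Finset.sum_const_zero] at heuler
        have hne : ((k + t + 1 : ℕ) : ℂ) ≠ 0 := Nat.cast_ne_zero.mpr (by omega)
        have := heuler.symm
        rw [mul_eq_zero] at this
        rcases this with h | h
        · exact absurd (by exact_mod_cast h) hne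
        · exact h
    exact key (d - k - (∑ i, m i)) m (by rw [aux_degree_eq_sum]; omega)
  · intro h
    rw [mem_apolarIdeal]
    set G := contract ((∑ i, a i • X i) ^ k) F with hG
    have hGhom : G.IsHomogeneous (d - k) := aux_contract_isHomogeneous hαk hF
    have hb : ∀ b : Fin n → ℂ, MvPolynomial.eval b G = 0 := by
      intro b
      have h1 := aux_contract_pow_linform b (d - k) G hGhom
      have hβ : ((∑ i, b i • X i : MvPolynomial (Fin n) ℂ) ^ (d - k)).IsHomogeneous (d - k) := by
        have hβ1 : (∑ i, b i • X i : MvPolynomial (Fin n) ℂ).IsHomogeneous 1 := by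
          rw [← mem_homogeneousSubmodule]
          refine Submodule.sum_mem _ fun i _ => Submodule.smul_mem _ _ ?_
          rw [mem_homogeneousSubmodule]
          exact isHomogeneous_X ℂ i
        simpa using hβ1.pow (d - k)
      have h2 : contract ((∑ i, b i • X i) ^ (d - k)) G = 0 := by
        rw [aux_contract_eq_sum]
        refine Finset.sum_eq_zero fun m hm => ?_
        have hdm : m.degree = d - k := by
          have := hβ (MvPolynomial.mem_support_iff.mp hm)
          rwa [Finsupp.degree_eq_weight_one]
        have h3 : contract (monomial m 1) G
            = contract ((∑ i, a i • X i) ^ k) (contract (monomial m 1) F) := by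
          rw [hG, ← aux_contract_mul, mul_comm, aux_contract_mul]
        have hdegm : (contract (monomial m 1) F).IsHomogeneous k := by
          have h4 := aux_pdm_isHomogeneous hF m
          convert h4 using 1
          omega
        rw [h3, aux_contract_pow_linform a k _ hdegm,
          h m (by rw [← aux_degree_eq_sum, hdm]), mul_zero, map_zero, smul_zero]
      rw [h2] at h1
      have h3 := (C_eq_zero.mp h1.symm)
      rcases mul_eq_zero.mp h3 with hzero | hzero
      · exact absurd hzero (hfac (d - k))
      · exact hzero
    exact MvPolynomial.funext fun x => by rw [hb x, map_zero]
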